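/- For every dyadic interval C of generation n with left or right half C^j (j ∈ {0,1}), the Thue–Morse measure satisfies ν(C) ≥ 2^{-n-1} inf_{y ∈ C^j} exp(ψ_n(y)). -/

import Mathlib

open MeasureTheory Real

noncomputable def P (n : ℕ) (x : ℝ) : ℝ :=
  ∏ ℓ ∈ Finset.range n, (1 - Real.cos (2 * Real.pi * 2 ^ ℓ * x))

lemma P_nonneg (n : ℕ) (x : ℝ) : 0 ≤ P n x :=
  Finset.prod_nonneg fun ℓ _ => by simpa using Real.cos_le_one _

lemma P_cont (n : ℕ) : Continuous (P n) := by
  unfold P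
  exact continuous_finset_prod _ fun ℓ _ => by continuity

lemma P_int_add (n : ℕ) (x : ℝ) (m : ℤ) : P n (x + m) = P n x := by
  unfold P
  refine Finset.prod_congr rfl fun ℓ _ => ?_
  have : 2 * Real.pi * 2 ^ ℓ * (x + m) = 2 * Real.pi * 2 ^ ℓ * x + (m * 2 ^ ℓ : ℤ) * (2 * Real.pi) := by
    push_cast; ring
  rw [this, Real.cos_add_int_mul_two_pi]

lemma P_neg (n : ℕ) (x : ℝ) : P n (-x) = P n x := by
  unfold P
  refine Finset.prod_congr rfl fun ℓ _ => ?_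
  rw [show 2 * Real.pi * 2 ^ ℓ * (-x) = -(2 * Real.pi * 2 ^ ℓ * x) by ring, Real.cos_neg]

lemma P_succ' (n : ℕ) (x : ℝ) : P (n + 1) x = (1 - Real.cos (2 * Real.pi * x)) * P n (2 * x) := by
  unfold P
  rw [Finset.prod_range_succ']
  have h : ∀ ℓ : ℕ, 2 * Real.pi * 2 ^ (ℓ + 1) * x = 2 * Real.pi * 2 ^ ℓ * (2 * x) := fun ℓ => by
    rw [pow_succ]; ring
  simp only [h]
  rw [mul_comm]
  norm_num

lemma P_add (n m : ℕ) (x : ℝ) : P (n + m) x = P n x * P m (2 ^ n * x) := by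
  unfold P
  rw [Finset.prod_range_add]
  have h : ∀ ℓ : ℕ, 2 * Real.pi * 2 ^ (n + ℓ) * x = 2 * Real.pi * 2 ^ ℓ * (2 ^ n * x) := fun ℓ => by
    rw [pow_add]; ring
  simp only [h]

lemma one_sub_cos_le (θ : ℝ) : 1 - Real.cos θ ≤ θ ^ 2 / 2 := by
  have h1 : Real.sin (θ / 2) ^ 2 = 1 / 2 - Real.cos θ / 2 := by
    have h := Real.sin_sq_eq_half_sub (θ / 2)
    rw [show 2 * (θ / 2) = θ by ring] at h
    simpa using h
  have h2 : Real.sin (θ / 2) ^ 2 ≤ (θ / 2) ^ 2 := Real.sin_sq_le_sq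
  nlinarith

lemma P_intble (n : ℕ) (a b : ℝ) : IntervalIntegrable (P n) volume a b :=
  (P_cont n).intervalIntegrable a b

lemma integral_P_shift (M : ℕ) (a b : ℝ) (m : ℤ) :
    ∫ x in (a + m)..(b + m), P M x = ∫ x in a..b, P M x := by
  rw [← intervalIntegral.integral_comp_add_right (P M) (m : ℝ)]
  simp only [P_int_add]

lemma integral_P_two_mul (M : ℕ) (a b : ℝ) :
    ∫ x in a..b, P M (2 * x) = (1 / 2) * ∫ x in (2 * a)..(2 * b), P M x := by
  have h := intervalIntegral.smul_integral_comp_mul_left (f := P M) (a := a) (b := b) 2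
  simp only [smul_eq_mul] at h
  linarith

lemma integral_P (M : ℕ) : ∫ x in (0:ℝ)..1, P M x = 1 := by
  induction M with
  | zero => simp [P]
  | succ M ih =>
    have hsplit : ∀ x : ℝ, P (M + 1) x = P M (2 * x) - Real.cos (2 * Real.pi * x) * P M (2 * x) :=
      fun x => by rw [P_succ']; ring
    rw [intervalIntegral.integral_congr (g := fun x => P M (2 * x) - Real.cos (2 * Real.pi * x) * P M (2 * x)) (fun x _ => hsplit x)]
    have i1 : IntervalIntegrable (fun x => P M (2 * x)) volume (0:ℝ) 1 :=
      (Continuous.intervalIntegrable (by have := P_cont M; continuity) 0 1)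
    have i2 : IntervalIntegrable (fun x => Real.cos (2 * Real.pi * x) * P M (2 * x)) volume (0:ℝ) 1 :=
      (Continuous.intervalIntegrable (by have := P_cont M; continuity) 0 1)
    rw [intervalIntegral.integral_sub i1 i2]
    have e1 : ∫ x in (0:ℝ)..1, P M (2 * x) = 1 := by
      rw [integral_P_two_mul]
      norm_num
      have : ∫ x in (0:ℝ)..2, P M x = (∫ x in (0:ℝ)..1, P M x) + ∫ x in (1:ℝ)..2, P M x :=
        (intervalIntegral.integral_add_adjacent_intervals (P_intble M 0 1) (P_intble M 1 2)).symm
      have h12 : ∫ x in (1:ℝ)..2, P M x = ∫ x in (0:ℝ)..1, P M x := by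
        have := integral_P_shift M 0 1 1
        norm_num at this
        exact this
      rw [this, h12, ih]
      norm_num
    have e2 : ∫ x in (0:ℝ)..1, Real.cos (2 * Real.pi * x) * P M (2 * x) = 0 := by
      set h : ℝ → ℝ := fun x => Real.cos (2 * Real.pi * x) * P M (2 * x) with hh
      have hcont : Continuous h := by have := P_cont M; fun_prop
      have hsplit2 : ∫ x in (0:ℝ)..1, h x = (∫ x in (0:ℝ)..(1/2), h x) + ∫ x in (1/2:ℝ)..1, h x :=
        (intervalIntegral.integral_add_adjacent_intervals (hcont.intervalIntegrable _ _)
          (hcont.intervalIntegrable _ _)).symm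
      have hshift : ∫ x in (1/2:ℝ)..1, h x = ∫ x in (0:ℝ)..(1/2), h (x + 1/2) := by
        rw [intervalIntegral.integral_comp_add_right h (1/2)]
        norm_num
      have hneg : ∀ x : ℝ, h (x + 1/2) = -h x := by
        intro x
        simp only [hh]
        have c1 : Real.cos (2 * Real.pi * (x + 1/2)) = -Real.cos (2 * Real.pi * x) := by
          rw [show 2 * Real.pi * (x + 1/2) = 2 * Real.pi * x + Real.pi by ring, Real.cos_add_pi]
        have c2 : P M (2 * (x + 1/2)) = P M (2 * x) := by
          rw [show 2 * (x + 1/2) = 2 * x + ((1:ℤ):ℝ) by push_cast; ring, P_int_add]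
        rw [c1, c2]
        ring
      rw [hsplit2, hshift, intervalIntegral.integral_congr (g := fun x => -h x) (fun x _ => hneg x),
        intervalIntegral.integral_neg]
      ring
    rw [e1, e2]
    norm_num

lemma P_one_sub (M : ℕ) (x : ℝ) : P M (1 - x) = P M x := by
  rw [show (1 : ℝ) - x = -x + ((1:ℤ):ℝ) by push_cast; ring, P_int_add, P_neg]

lemma integral_P_reflect (M : ℕ) (ε : ℝ) :
    ∫ x in (1 - ε)..1, P M x = ∫ x in (0:ℝ)..ε, P M x := by
  have h := intervalIntegral.integral_comp_sub_left (a := (0:ℝ)) (b := ε) (P M) 1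
  simp only [P_one_sub] at h
  rw [h]
  norm_num

lemma integral_P_halves (M : ℕ) (j : ℕ) (hj : j < 2) :
    ∫ x in ((j:ℝ)/2)..((j+1:ℝ)/2), P M x = 1 / 2 := by
  have hsum : (∫ x in (0:ℝ)..(1/2), P M x) + ∫ x in (1/2:ℝ)..1, P M x = 1 := by
    rw [intervalIntegral.integral_add_adjacent_intervals (P_intble M _ _) (P_intble M _ _),
      integral_P]
  have heq : ∫ x in (1/2:ℝ)..1, P M x = ∫ x in (0:ℝ)..(1/2), P M x := by
    have := integral_P_reflect M (1/2)
    norm_num at this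
    convert this using 2 <;> norm_num
  interval_cases j
  · have : ∫ x in (0:ℝ)..(1/2), P M x = 1/2 := by linarith
    convert this using 2 <;> norm_num
  · have : ∫ x in (1/2:ℝ)..1, P M x = 1/2 := by linarith
    convert this using 2 <;> norm_num

lemma integral_P_near_zero (M : ℕ) (hM : 1 ≤ M) {ε : ℝ} (hε : 0 ≤ ε) (hε2 : ε ≤ 1/2) :
    ∫ x in (0:ℝ)..ε, P M x ≤ Real.pi ^ 2 * ε ^ 2 := by
  obtain ⟨M', rfl⟩ : ∃ M', M = M' + 1 := ⟨M - 1, by omega⟩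
  have hmono : ∀ x ∈ Set.Icc (0:ℝ) ε, P (M' + 1) x ≤ 2 * Real.pi ^ 2 * ε ^ 2 * P M' (2 * x) := by
    intro x hx
    rw [P_succ']
    have h1 : 1 - Real.cos (2 * Real.pi * x) ≤ 2 * Real.pi ^ 2 * ε ^ 2 := by
      have := one_sub_cos_le (2 * Real.pi * x)
      have hx2 : x ^ 2 ≤ ε ^ 2 := by nlinarith [hx.1, hx.2]
      nlinarith [Real.pi_pos]
    have h2 : 0 ≤ P M' (2 * x) := P_nonneg _ _
    nlinarith [P_nonneg (M' + 1) x]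
  have hint : ∫ x in (0:ℝ)..ε, P (M' + 1) x ≤ ∫ x in (0:ℝ)..ε, 2 * Real.pi ^ 2 * ε ^ 2 * P M' (2 * x) := by
    refine intervalIntegral.integral_mono_on hε (P_intble _ _ _) ?_ hmono
    exact Continuous.intervalIntegrable (by have := P_cont M'; fun_prop) _ _
  have hval : ∫ x in (0:ℝ)..ε, 2 * Real.pi ^ 2 * ε ^ 2 * P M' (2 * x)
      = 2 * Real.pi ^ 2 * ε ^ 2 * ((1/2) * ∫ x in (0:ℝ)..(2*ε), P M' x) := by
    rw [intervalIntegral.integral_const_mul, integral_P_two_mul]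
    norm_num
  have hle1 : ∫ x in (0:ℝ)..(2*ε), P M' x ≤ 1 := by
    rw [← integral_P M']
    refine intervalIntegral.integral_mono_interval le_rfl (by linarith) (by linarith) ?_ (P_intble _ _ _)
    filter_upwards with x using P_nonneg _ _
  calc ∫ x in (0:ℝ)..ε, P (M' + 1) x
      ≤ 2 * Real.pi ^ 2 * ε ^ 2 * ((1/2) * ∫ x in (0:ℝ)..(2*ε), P M' x) := by rw [← hval]; exact hint
    _ ≤ Real.pi ^ 2 * ε ^ 2 := by
        have hnn : (0:ℝ) ≤ ∫ x in (0:ℝ)..(2*ε), P M' x :=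
          intervalIntegral.integral_nonneg (μ := volume) (by linarith) (fun x _ => P_nonneg M' x)
        have hc : (0:ℝ) ≤ Real.pi ^ 2 * ε ^ 2 := by positivity
        nlinarith [mul_nonneg hc (sub_nonneg.2 hle1)]

noncomputable def psi (x : ℝ) : ℝ := Real.log (1 - Real.cos (2 * Real.pi * x))

noncomputable def psiSum (n : ℕ) (x : ℝ) : ℝ :=
  ∑ ℓ ∈ Finset.range n, psi (Int.fract ((2:ℝ) ^ ℓ * x))

lemma exp_psiSum_eq (n : ℕ) {y : ℝ} (h : ∀ ℓ < n, Real.cos (2 * Real.pi * 2 ^ ℓ * y) < 1) :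
    Real.exp (psiSum n y) = P n y := by
  unfold psiSum P psi
  rw [Real.exp_sum]
  refine Finset.prod_congr rfl fun ℓ hℓ => ?_
  have hc : Real.cos (2 * Real.pi * Int.fract ((2:ℝ) ^ ℓ * y)) = Real.cos (2 * Real.pi * 2 ^ ℓ * y) := by
    rw [Int.fract,
      show 2 * Real.pi * ((2:ℝ) ^ ℓ * y - (⌊(2:ℝ) ^ ℓ * y⌋ : ℝ))
        = 2 * Real.pi * 2 ^ ℓ * y - (⌊(2:ℝ) ^ ℓ * y⌋ : ℝ) * (2 * Real.pi) by ring]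
    exact Real.cos_sub_int_mul_two_pi _ _
  rw [hc, Real.exp_log (by have := h ℓ (Finset.mem_range.1 hℓ); linarith)]

lemma cos_lt_one_interior (n ℓ : ℕ) (hℓ : ℓ < n) (m : ℕ) {y : ℝ}
    (hy : y ∈ Set.Ioo ((m : ℝ) / 2 ^ (n+1)) ((m + 1 : ℝ) / 2 ^ (n+1))) :
    Real.cos (2 * Real.pi * 2 ^ ℓ * y) < 1 := by
  refine lt_of_le_of_ne (Real.cos_le_one _) ?_
  intro heq
  obtain ⟨q, hq⟩ := (Real.cos_eq_one_iff _).1 heq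
  have hpi : (2 * Real.pi) ≠ 0 := by positivity
  have hy' : (2:ℝ) ^ ℓ * y = q := by
    apply mul_left_cancel₀ hpi
    rw [show 2 * Real.pi * ((2:ℝ) ^ ℓ * y) = 2 * Real.pi * 2 ^ ℓ * y by ring, ← hq]
    ring
  have hpow : (2:ℝ) ^ (n+1) = 2 ^ ℓ * 2 ^ (n + 1 - ℓ) := by
    rw [← pow_add]; congr 1; omega
  have h2 : y * 2 ^ (n+1) = ((q * 2 ^ (n + 1 - ℓ) : ℤ) : ℝ) := by
    push_cast
    rw [hpow, show y * ((2:ℝ) ^ ℓ * 2 ^ (n + 1 - ℓ)) = ((2:ℝ) ^ ℓ * y) * 2 ^ (n + 1 - ℓ) by ring,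
      hy']
  have hp : (0:ℝ) < 2 ^ (n+1) := by positivity
  have hlb : (m : ℝ) < y * 2 ^ (n+1) := by
    have := hy.1
    rw [div_lt_iff₀ hp] at this
    linarith
  have hub : y * 2 ^ (n+1) < (m : ℝ) + 1 := by
    have := hy.2
    rw [lt_div_iff₀ hp] at this
    linarith
  rw [h2] at hlb hub
  have h1 : (m : ℤ) < q * 2 ^ (n + 1 - ℓ) := by exact_mod_cast hlb
  have h2' : q * 2 ^ (n + 1 - ℓ) < (m : ℤ) + 1 := by exact_mod_cast hub
  omega

noncomputable def gfun (n k r : ℕ) (x : ℝ) : ℝ :=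
  max 0 (min 1 (min ((x - (k:ℝ)/2^n) * (2^n * 2^r)) (((k+1:ℝ)/2^n - x) * (2^n * 2^r))))

lemma gfun_cont (n k r : ℕ) : Continuous (gfun n k r) := by
  unfold gfun; fun_prop

lemma gfun_nonneg (n k r : ℕ) (x : ℝ) : 0 ≤ gfun n k r x := le_max_left _ _

lemma gfun_le_one (n k r : ℕ) (x : ℝ) : gfun n k r x ≤ 1 :=
  max_le zero_le_one (min_le_left _ _)

lemma gfun_eq_zero (n k r : ℕ) {x : ℝ} (h : x ≤ (k:ℝ)/2^n ∨ (k+1:ℝ)/2^n ≤ x) :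
    gfun n k r x = 0 := by
  unfold gfun
  have hs : (0:ℝ) < 2^n * 2^r := by positivity
  have : min ((x - (k:ℝ)/2^n) * (2^n * 2^r)) (((k+1:ℝ)/2^n - x) * (2^n * 2^r)) ≤ 0 := by
    rcases h with h | h
    · exact (min_le_left _ _).trans (by nlinarith)
    · exact (min_le_right _ _).trans (by nlinarith)
  exact max_eq_left ((min_le_right _ _).trans this)

lemma gfun_eq_one (n k r : ℕ) {x : ℝ}
    (h1 : (k:ℝ)/2^n + 1/(2^n * 2^r) ≤ x) (h2 : x ≤ (k+1:ℝ)/2^n - 1/(2^n * 2^r)) :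
    gfun n k r x = 1 := by
  unfold gfun
  have hs : (0:ℝ) < 2^n * 2^r := by positivity
  have e1 : (1:ℝ) ≤ (x - (k:ℝ)/2^n) * (2^n * 2^r) := by
    rw [← div_le_iff₀ hs]; linarith
  have e2 : (1:ℝ) ≤ ((k+1:ℝ)/2^n - x) * (2^n * 2^r) := by
    rw [← div_le_iff₀ hs]; linarith
  rw [min_eq_left (le_min e1 e2), max_eq_right zero_le_one]

set_option maxHeartbeats 1000000 in
lemma key_estimate (n k j r M : ℕ) (hk : k < 2^n) (hj : j < 2) (hr : 1 ≤ r) (hM : 1 ≤ M)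
    (I : ℝ) (hI0 : 0 ≤ I)
    (hIP : ∀ y ∈ Set.Icc ((2*k+j : ℝ) / 2^(n+1)) ((2*k+j+1 : ℝ) / 2^(n+1)), I ≤ P n y) :
    I * ((1/2 - 2 * Real.pi^2 * (1/2^r)^2) / 2^n)
      ≤ ∫ x in (0:ℝ)..1, gfun n k r x * P (n + M) x := by
  set c : ℝ := 2^n with hc
  set e : ℝ := 2^r with he
  have h2n : (0:ℝ) < c := by positivity
  have h2r : (2:ℝ) ≤ e := by
    rw [he]; calc (2:ℝ) = 2^1 := by norm_num
    _ ≤ 2^r := by apply pow_le_pow_right₀ <;> norm_num <;> omega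
  have h2r0 : (0:ℝ) < e := by positivity
  set a : ℝ := (k:ℝ)/2^n with ha
  set b : ℝ := (k+1:ℝ)/2^n with hb
  set A : ℝ := (2*k+j : ℝ) / 2^(n+1) with hA
  set B : ℝ := (2*k+j+1 : ℝ) / 2^(n+1) with hB
  set δ : ℝ := 1/(c * e) with hδ
  have hδ0 : 0 < δ := by positivity
  have hp1 : (2:ℝ)^(n+1) = 2 * c := by rw [hc, pow_succ]; ring
  have haA : a ≤ A := by
    rw [ha, hA, hp1, div_le_div_iff₀ (by positivity) (by positivity)]
    push_cast; nlinarith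
  have hBb : B ≤ b := by
    rw [hb, hB, hp1, div_le_div_iff₀ (by positivity) (by positivity)]
    push_cast
    have : (j:ℝ) ≤ 1 := by exact_mod_cast Nat.lt_succ_iff.1 hj
    nlinarith
  have hAB : A ≤ B := by
    rw [hA, hB]
    apply div_le_div_of_nonneg_right ?_ (by positivity)
    · linarith
  have h0a : 0 ≤ a := by positivity
  have hb1 : b ≤ 1 := by
    rw [hb, div_le_one (by positivity)]
    push_cast
    have : (k:ℝ) + 1 ≤ (2:ℝ)^n := by exact_mod_cast hk
    linarith
  have hba : b - a = 1/c := by rw [ha, hb]; field_simp; rw [hc]; ring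
  have hδ2 : a + δ ≤ b - δ := by
    have : 2 * δ ≤ 1 / c := by
      rw [hδ, mul_one_div, div_le_div_iff₀ (by positivity) h2n]
      nlinarith
    linarith
  have hgc := gfun_cont n k r
  have hQc : Continuous (fun x : ℝ => P M (c * x)) := by
    have := P_cont M; fun_prop
  have hPnc := P_cont n
  have hPNc := P_cont (n + M)
  have hadd : ∀ x, P (n + M) x = P n x * P M (c * x) := fun x => P_add n M x
  -- Step 1: restrict to [A, B]
  have s1 : ∫ x in A..B, gfun n k r x * P (n + M) x
      ≤ ∫ x in (0:ℝ)..1, gfun n k r x * P (n + M) x := by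
    refine intervalIntegral.integral_mono_interval (by positivity) hAB (hBb.trans hb1) ?_ ?_
    · filter_upwards with x
      exact mul_nonneg (gfun_nonneg n k r x) (P_nonneg _ _)
    · exact (hgc.mul hPNc).intervalIntegrable _ _
  -- Step 2/3: lower bound on [A,B]
  have s3 : ∫ x in A..B, I * (gfun n k r x * P M (c * x))
      ≤ ∫ x in A..B, gfun n k r x * P (n + M) x := by
    refine intervalIntegral.integral_mono_on hAB ?_ ?_ ?_
    · exact (continuous_const.mul (hgc.mul hQc)).intervalIntegrable _ _
    · exact (hgc.mul hPNc).intervalIntegrable _ _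
    · intro x hx
      rw [hadd x]
      have h1 := hIP x hx
      have h2 := gfun_nonneg n k r x
      have h3 := P_nonneg M (c * x)
      nlinarith [mul_le_mul_of_nonneg_right h1 (mul_nonneg h2 h3)]
  rw [intervalIntegral.integral_const_mul] at s3
  -- Step 4: decompose
  have s5 : ∫ x in A..B, gfun n k r x * P M (c * x)
      = (∫ x in A..B, P M (c * x)) - ∫ x in A..B, (1 - gfun n k r x) * P M (c * x) := by
    rw [← intervalIntegral.integral_sub (f := fun x => P M (c * x)) (g := fun x => (1 - gfun n k r x) * P M (c * x)) (hQc.intervalIntegrable _ _)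
      (((continuous_const.sub hgc).mul hQc).intervalIntegrable _ _)]
    refine intervalIntegral.integral_congr fun x _ => ?_
    ring
  -- Step 5: main term
  have hsubst : ∀ u v : ℝ, ∫ x in u..v, P M (c * x) = (1/c) * ∫ x in (c*u)..(c*v), P M x := by
    intro u v
    have h := intervalIntegral.smul_integral_comp_mul_left (f := P M) (a := u) (b := v) c
    simp only [smul_eq_mul] at h
    rw [← h]
    field_simp
  have hcA : c * A = (j:ℝ)/2 + (k:ℤ) := by
    rw [hA, hp1]
    field_simp
    push_cast
    ring
  have hcB : c * B = (j+1:ℝ)/2 + (k:ℤ) := by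
    rw [hB, hp1]
    field_simp
    push_cast
    ring
  have s6 : ∫ x in A..B, P M (c * x) = (1/c) * (1/2) := by
    rw [hsubst A B, hcA, hcB]
    rw [integral_P_shift M ((j:ℝ)/2) ((j+1:ℝ)/2) k, integral_P_halves M j hj]
  -- Step 6: error term
  have s7 : ∫ x in A..B, (1 - gfun n k r x) * P M (c * x)
      ≤ ∫ x in a..b, (1 - gfun n k r x) * P M (c * x) := by
    refine intervalIntegral.integral_mono_interval haA hAB hBb ?_ ?_
    · filter_upwards with x
      exact mul_nonneg (by linarith [gfun_le_one n k r x]) (P_nonneg _ _)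
    · exact ((continuous_const.sub hgc).mul hQc).intervalIntegrable _ _
  have hint1 : IntervalIntegrable (fun x => (1 - gfun n k r x) * P M (c * x)) volume a (a + δ) :=
    ((continuous_const.sub hgc).mul hQc).intervalIntegrable _ _
  have hint2 : IntervalIntegrable (fun x => (1 - gfun n k r x) * P M (c * x)) volume (a + δ) (b - δ) :=
    ((continuous_const.sub hgc).mul hQc).intervalIntegrable _ _
  have hint3 : IntervalIntegrable (fun x => (1 - gfun n k r x) * P M (c * x)) volume (b - δ) b :=
    ((continuous_const.sub hgc).mul hQc).intervalIntegrable _ _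
  have s8 : ∫ x in a..b, (1 - gfun n k r x) * P M (c * x)
      = (∫ x in a..(a+δ), (1 - gfun n k r x) * P M (c * x))
        + (∫ x in (a+δ)..(b-δ), (1 - gfun n k r x) * P M (c * x))
        + ∫ x in (b-δ)..b, (1 - gfun n k r x) * P M (c * x) := by
    rw [intervalIntegral.integral_add_adjacent_intervals hint1 hint2,
      intervalIntegral.integral_add_adjacent_intervals (hint1.trans hint2) hint3]
  have s9 : ∫ x in (a+δ)..(b-δ), (1 - gfun n k r x) * P M (c * x) = 0 := by
    rw [intervalIntegral.integral_congr (g := fun _ => (0:ℝ)) ?_, intervalIntegral.integral_zero]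
    intro x hx
    rw [Set.uIcc_of_le hδ2] at hx
    have : gfun n k r x = 1 := by
      apply gfun_eq_one
      · rw [show (1:ℝ)/(2^n * 2^r) = δ by rw [hδ, hc, he]]
        exact hx.1
      · rw [show (1:ℝ)/(2^n * 2^r) = δ by rw [hδ, hc, he]]
        exact hx.2
    simp [this]
  have hε2 : (1:ℝ)/e ≤ 1/2 := by
    rw [div_le_div_iff₀ h2r0 (by norm_num)]; linarith
  have hε0 : (0:ℝ) ≤ 1/e := by positivity
  have s10 : ∫ x in a..(a+δ), (1 - gfun n k r x) * P M (c * x) ≤ Real.pi^2 * (1/e)^2 / c := by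
    have step1 : ∫ x in a..(a+δ), (1 - gfun n k r x) * P M (c * x)
        ≤ ∫ x in a..(a+δ), P M (c * x) := by
      refine intervalIntegral.integral_mono_on (by linarith) hint1
        (hQc.intervalIntegrable _ _) ?_
      intro x hx
      have h1 := gfun_nonneg n k r x
      have h2 := P_nonneg M (c * x)
      nlinarith
    have hca : c * a = ((0:ℝ) + (k:ℤ)) := by rw [ha]; push_cast; field_simp; rw [hc]; ring
    have hcaδ : c * (a + δ) = (1/e + (k:ℤ)) := by
      simp only [ha, hδ, hc, he]; push_cast; field_simp; ring
    have step2 : ∫ x in a..(a+δ), P M (c * x) = (1/c) * ∫ x in (0:ℝ)..(1/e), P M x := by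
      rw [hsubst, hca, hcaδ, integral_P_shift M 0 (1/e) k]
    have step3 : ∫ x in (0:ℝ)..(1/e), P M x ≤ Real.pi^2 * (1/e)^2 :=
      integral_P_near_zero M hM hε0 hε2
    calc ∫ x in a..(a+δ), (1 - gfun n k r x) * P M (c * x)
        ≤ (1/c) * ∫ x in (0:ℝ)..(1/e), P M x := by rw [← step2]; exact step1
      _ ≤ (1/c) * (Real.pi^2 * (1/e)^2) := mul_le_mul_of_nonneg_left step3 (by positivity)
      _ = Real.pi^2 * (1/e)^2 / c := by ring
  have s11 : ∫ x in (b-δ)..b, (1 - gfun n k r x) * P M (c * x) ≤ Real.pi^2 * (1/e)^2 / c := by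
    have step1 : ∫ x in (b-δ)..b, (1 - gfun n k r x) * P M (c * x)
        ≤ ∫ x in (b-δ)..b, P M (c * x) := by
      refine intervalIntegral.integral_mono_on (by linarith) hint3
        (hQc.intervalIntegrable _ _) ?_
      intro x hx
      have h1 := gfun_nonneg n k r x
      have h2 := P_nonneg M (c * x)
      nlinarith
    have hcb : c * b = ((1:ℝ) + (k:ℤ)) := by rw [hb]; push_cast; field_simp; ring
    have hcbδ : c * (b - δ) = (1 - 1/e + (k:ℤ)) := by
      rw [hb, hδ]; push_cast; field_simp; ring
    have step2 : ∫ x in (b-δ)..b, P M (c * x) = (1/c) * ∫ x in (1-1/e:ℝ)..1, P M x := by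
      rw [hsubst, hcb, hcbδ, integral_P_shift M (1-1/e) 1 k]
    have step3 : ∫ x in (1-1/e:ℝ)..1, P M x ≤ Real.pi^2 * (1/e)^2 := by
      rw [integral_P_reflect]
      exact integral_P_near_zero M hM hε0 hε2
    calc ∫ x in (b-δ)..b, (1 - gfun n k r x) * P M (c * x)
        ≤ (1/c) * ∫ x in (1-1/e:ℝ)..1, P M x := by rw [← step2]; exact step1
      _ ≤ (1/c) * (Real.pi^2 * (1/e)^2) := mul_le_mul_of_nonneg_left step3 (by positivity)
      _ = Real.pi^2 * (1/e)^2 / c := by ring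
  -- combine
  have hE : (1/2 - 2 * Real.pi^2 * (1/e)^2) / c ≤ ∫ x in A..B, gfun n k r x * P M (c * x) := by
    rw [s5, s6]
    have := s7
    rw [s8, s9] at this
    have hsum : ∫ x in A..B, (1 - gfun n k r x) * P M (c * x)
        ≤ 2 * (Real.pi^2 * (1/e)^2 / c) := by linarith
    have : (1/2 - 2 * Real.pi^2 * (1/e)^2) / c
        = 1/c * (1/2) - 2 * (Real.pi^2 * (1/e)^2 / c) := by field_simp
    linarith
  calc I * ((1/2 - 2 * Real.pi^2 * (1/2^r)^2) / 2^n)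
      = I * ((1/2 - 2 * Real.pi^2 * (1/e)^2) / c) := by rw [← he, ← hc]
    _ ≤ I * ∫ x in A..B, gfun n k r x * P M (c * x) := mul_le_mul_of_nonneg_left hE hI0
    _ ≤ ∫ x in A..B, gfun n k r x * P (n + M) x := s3
    _ ≤ ∫ x in (0:ℝ)..1, gfun n k r x * P (n + M) x := s1

theorem nu_cylinder_lower_bound (ν : Measure ℝ) [IsProbabilityMeasure ν]
    (hsupp : ν (Set.Icc (0:ℝ) 1)ᶜ = 0)
    (hν : ∀ f : ℝ → ℝ, Continuous f →
      Filter.Tendsto (fun N => ∫ x in (0:ℝ)..1, f x * P N x) Filter.atTop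
        (nhds (∫ x, f x ∂ν))) :
    ∀ n k j : ℕ, k < 2^n → j < 2 →
      (ν (Set.Icc ((k:ℝ) / 2^n) ((k+1 : ℝ) / 2^n))).toReal ≥
        (1/2)^(n+1) * sInf ((fun y => Real.exp (psiSum n y)) ''
          Set.Icc ((2*k+j : ℝ) / 2^(n+1)) ((2*k+j+1 : ℝ) / 2^(n+1))) := by
  intro n k j hk hj
  set A : ℝ := (2*k+j : ℝ) / 2^(n+1) with hA
  set B : ℝ := (2*k+j+1 : ℝ) / 2^(n+1) with hB
  have hABlt : A < B := by
    rw [hA, hB]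
    have hp : (0:ℝ) < 2^(n+1) := by positivity
    rw [div_lt_div_iff₀ hp hp]
    nlinarith
  set S : Set ℝ := (fun y => Real.exp (psiSum n y)) '' Set.Icc A B with hS
  have hSne : S.Nonempty := ⟨_, Set.mem_image_of_mem _ (Set.left_mem_Icc.2 hABlt.le)⟩
  have hSbdd : BddBelow S := ⟨0, fun x hx => by
    obtain ⟨y, _, rfl⟩ := hx
    exact (Real.exp_pos _).le⟩
  set I : ℝ := sInf S with hI
  have hI0 : 0 ≤ I := le_csInf hSne fun x hx => by
    obtain ⟨y, _, rfl⟩ := hx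
    exact (Real.exp_pos _).le
  have hIP : ∀ y ∈ Set.Icc A B, I ≤ P n y := by
    have hIoo : Set.Ioo A B ⊆ {y : ℝ | I ≤ P n y} := by
      intro y hy
      have hy' : y ∈ Set.Ioo (((2*k+j : ℕ) : ℝ) / 2^(n+1)) ((((2*k+j : ℕ) : ℝ) + 1) / 2^(n+1)) := by
        constructor
        · have := hy.1; rw [hA] at this; push_cast; push_cast at this; linarith
        · have := hy.2; rw [hB] at this; push_cast; push_cast at this; linarith
      have hcos : ∀ ℓ < n, Real.cos (2 * Real.pi * 2 ^ ℓ * y) < 1 := fun ℓ hℓ =>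
        cos_lt_one_interior n ℓ hℓ (2*k+j) hy'
      show I ≤ P n y
      rw [← exp_psiSum_eq n hcos]
      exact csInf_le hSbdd (Set.mem_image_of_mem _ (Set.Ioo_subset_Icc_self hy))
    intro y hy
    have hclosed : IsClosed {y : ℝ | I ≤ P n y} := isClosed_le continuous_const (P_cont n)
    have hsub : Set.Icc A B ⊆ {y : ℝ | I ≤ P n y} := by
      rw [← closure_Ioo hABlt.ne]
      exact closure_minimal hIoo hclosed
    exact hsub hy
  have hbound : ∀ r : ℕ, 1 ≤ r →
      I * ((1/2 - 2 * Real.pi^2 * (1/2^r)^2) / 2^n)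
        ≤ (ν (Set.Icc ((k:ℝ) / 2^n) ((k+1 : ℝ) / 2^n))).toReal := by
    intro r hr
    have hgcont := gfun_cont n k r
    have htend := hν (gfun n k r) hgcont
    have hev : ∀ᶠ N in Filter.atTop,
        I * ((1/2 - 2 * Real.pi^2 * (1/2^r)^2) / 2^n)
          ≤ ∫ x in (0:ℝ)..1, gfun n k r x * P N x := by
      filter_upwards [Filter.eventually_ge_atTop (n+1)] with N hN
      obtain ⟨M, rfl⟩ : ∃ M, N = n + M := ⟨N - n, by omega⟩
      exact key_estimate n k j r M hk hj hr (by omega) I hI0 hIP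
    have h1 : I * ((1/2 - 2 * Real.pi^2 * (1/2^r)^2) / 2^n) ≤ ∫ x, gfun n k r x ∂ν :=
      ge_of_tendsto htend hev
    have hg_int : Integrable (gfun n k r) ν := by
      refine Integrable.mono' (integrable_const (1:ℝ)) hgcont.aestronglyMeasurable
        (Filter.Eventually.of_forall fun x => ?_)
      rw [Real.norm_eq_abs, abs_of_nonneg (gfun_nonneg n k r x)]
      exact gfun_le_one n k r x
    have hind : Integrable ((Set.Icc ((k:ℝ) / 2^n) ((k+1 : ℝ) / 2^n)).indicator
        (fun _ => (1:ℝ))) ν := (integrable_const 1).indicator measurableSet_Icc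
    have h2 : ∫ x, gfun n k r x ∂ν
        ≤ ∫ x, (Set.Icc ((k:ℝ) / 2^n) ((k+1 : ℝ) / 2^n)).indicator (fun _ => (1:ℝ)) x ∂ν := by
      refine integral_mono hg_int hind fun x => ?_
      by_cases hx : x ∈ Set.Icc ((k:ℝ) / 2^n) ((k+1 : ℝ) / 2^n)
      · rw [Set.indicator_of_mem hx]
        exact gfun_le_one n k r x
      · rw [Set.indicator_of_notMem hx]
        rw [Set.mem_Icc, not_and_or, not_le, not_le] at hx
        rw [gfun_eq_zero n k r (by rcases hx with h | h; exacts [Or.inl h.le, Or.inr h.le])]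
    have h3 : ∫ x, (Set.Icc ((k:ℝ) / 2^n) ((k+1 : ℝ) / 2^n)).indicator (fun _ => (1:ℝ)) x ∂ν
        = (ν (Set.Icc ((k:ℝ) / 2^n) ((k+1 : ℝ) / 2^n))).toReal := by
      rw [integral_indicator_const (1:ℝ) measurableSet_Icc, smul_eq_mul, mul_one]; rfl
    linarith
  have hb2 : Filter.Tendsto (fun r : ℕ => (1/2:ℝ)^r) Filter.atTop (nhds 0) :=
    tendsto_pow_atTop_nhds_zero_of_lt_one (by norm_num) (by norm_num)
  have hφ : Continuous fun t : ℝ => I * ((1/2 - 2 * Real.pi^2 * t^2) / 2^n) := by fun_prop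
  have htend2 : Filter.Tendsto (fun r : ℕ => I * ((1/2 - 2 * Real.pi^2 * ((1/2:ℝ)^r)^2) / 2^n))
      Filter.atTop (nhds (I * ((1/2 - 2 * Real.pi^2 * (0:ℝ)^2) / 2^n))) :=
    (hφ.tendsto 0).comp hb2
  have hfinal : I * ((1/2 - 2 * Real.pi^2 * (0:ℝ)^2) / 2^n)
      ≤ (ν (Set.Icc ((k:ℝ) / 2^n) ((k+1 : ℝ) / 2^n))).toReal := by
    refine le_of_tendsto htend2 ?_
    filter_upwards [Filter.eventually_ge_atTop 1] with r hr
    have := hbound r hr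
    rw [show ((1/2:ℝ)^r) = 1/2^r by rw [one_div_pow]]
    exact this
  calc (1/2:ℝ)^(n+1) * I = I * ((1/2 - 2 * Real.pi^2 * (0:ℝ)^2) / 2^n) := by
        rw [pow_succ]
        have : ((1:ℝ)/2)^n = 1/2^n := by rw [one_div_pow]
        rw [this]
        ring
    _ ≤ _ := hfinal
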